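/- Let {X_m}_{m=1}^∞ be a sequence of complex-valued random variables on a common probability space, each having the same distribution, with E[X_1] = 0 and |X_m| ≤ B almost surely for some constant B > 0 (so in particular E[|X_1|^2] is finite). If the series Σ_{K≥1} (1/K^3) · E[|Σ_{m≤K} X_m|^2] converges, then the strong law of large numbers holds for {X_m}, i.e., (1/K) Σ_{m≤K} X_m → 0 almost surely as K → ∞. -/

import Mathlib

open MeasureTheory Filter

/-- **A strong law of large numbers for identically distributed (not necessarily
independent) bounded complex random variables.**  If `X 1, X 2, ...` are identically
distributed complex random variables with `E[X 1] = 0`, `|X m| ≤ B` almost surely,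
and `Σ_{K ≥ 1} K⁻³ E[|Σ_{m ≤ K} X m|²] < ∞`, then `K⁻¹ Σ_{m ≤ K} X m → 0`
almost surely. -/
lemma lip_chain (S : ℕ → ℂ) (B : ℝ) (hlip : ∀ K, ‖S (K+1) - S K‖ ≤ B) :
    ∀ d K, ‖S (K+d) - S K‖ ≤ B * d := by
  intro d
  induction d with
  | zero => intro K; simp
  | succ d ih =>
    intro K
    have : S (K + (d+1)) - S K = (S (K + d + 1) - S (K + d)) + (S (K + d) - S K) := by
      ring_nf
    rw [this]
    calc ‖(S (K + d + 1) - S (K + d)) + (S (K + d) - S K)‖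
        ≤ ‖S (K + d + 1) - S (K + d)‖ + ‖S (K + d) - S K‖ := norm_add_le _ _
      _ ≤ B + B * d := add_le_add (hlip _) (ih K)
      _ = B * (d + 1 : ℕ) := by push_cast; ring

lemma det_sln (S : ℕ → ℂ) (B : ℝ) (hB : 0 < B)
    (hlip : ∀ K, ‖S (K+1) - S K‖ ≤ B)
    (hsum : Summable fun K : ℕ => (1/(K:ℝ)^3) * ‖S K‖^2) :
    Tendsto (fun K : ℕ => ‖S K‖ / K) atTop (nhds 0) := by
  set f : ℕ → ℝ := fun K => (1/(K:ℝ)^3) * ‖S K‖^2 with hf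
  have hfnn : ∀ K, 0 ≤ f K := fun K => by positivity
  rw [Metric.tendsto_atTop]
  intro ε hε
  by_contra hcon
  push_neg at hcon
  set ε' : ℝ := min ε B with hε'
  have hε'pos : 0 < ε' := lt_min hε hB
  have hε'B : ε' ≤ B := min_le_right _ _
  set c : ℝ := ε'^3 / (64 * B) with hc
  have hcpos : 0 < c := by positivity
  -- tail smallness
  have hten : Tendsto (fun n => ∑ i ∈ Finset.range n, f i) atTop (nhds (∑' i, f i)) :=
    hsum.hasSum.tendsto_sum_nat
  have hpartial_le : ∀ n, ∑ i ∈ Finset.range n, f i ≤ ∑' i, f i :=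
    fun n => Summable.sum_le_tsum _ (fun i _ => hfnn i) hsum
  obtain ⟨N, hN⟩ := (Metric.tendsto_atTop.1 hten) c hcpos
  -- pick a bad K
  obtain ⟨K, hKN, hKbad⟩ := hcon (max N 1)
  have hK1 : 1 ≤ K := le_trans (le_max_right _ _) hKN
  have hKpos : (0:ℝ) < K := by exact_mod_cast hK1
  have hKbad' : ε' * K ≤ ‖S K‖ := by
    have hdiv : ε ≤ ‖S K‖ / K := by
      rwa [dist_zero_right, Real.norm_eq_abs, abs_of_nonneg (by positivity)] at hKbad
    have h1 : ε * K ≤ ‖S K‖ := (le_div_iff₀ hKpos).mp hdiv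
    nlinarith [min_le_left ε B]
  set L : ℕ := ⌊ε' * K / (2 * B)⌋₊ with hL
  have hLle : (L:ℝ) ≤ ε' * K / (2 * B) := Nat.floor_le (by positivity)
  have hLge : ε' * K / (2 * B) ≤ (L:ℝ) + 1 := le_of_lt (Nat.lt_floor_add_one _)
  have hhalf : ε' * K / (2 * B) ≤ K / 2 := by
    rw [div_le_div_iff₀ (by positivity) (by norm_num)]
    nlinarith
  -- lower bound on each term in the block
  have hblock_term : ∀ J ∈ Finset.Icc K (K + L), ε'^2 / (32 * K) ≤ f J := by
    intro J hJ
    obtain ⟨hJ1, hJ2⟩ := Finset.mem_Icc.1 hJ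
    have hJK : (K:ℝ) ≤ J := by exact_mod_cast hJ1
    have hJ2K : (J:ℝ) ≤ 2 * K := by
      have : (J:ℝ) ≤ K + L := by exact_mod_cast hJ2
      nlinarith
    have hSJ : ε' * K / 2 ≤ ‖S J‖ := by
      obtain ⟨d, rfl⟩ := Nat.exists_eq_add_of_le hJ1
      have h1 : ‖S (K + d) - S K‖ ≤ B * d := lip_chain S B hlip d K
      have h2 : ‖S K‖ ≤ ‖S (K + d)‖ + ‖S (K + d) - S K‖ := by
        calc ‖S K‖ = ‖S (K + d) - (S (K + d) - S K)‖ := by ring_nf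
          _ ≤ _ := norm_sub_le _ _
      have hd : (d:ℝ) ≤ L := by
        have : d ≤ L := by omega
        exact_mod_cast this
      have hBL : B * L ≤ ε' * K / 2 := by
        have h := mul_le_mul_of_nonneg_left hLle hB.le
        have he : B * (ε' * ↑K / (2 * B)) = ε' * ↑K / 2 := by field_simp
        linarith
      nlinarith
    have hJpos : (0:ℝ) < J := lt_of_lt_of_le hKpos hJK
    have hJ3 : (J:ℝ)^3 ≤ 8 * K^3 := by
      have h := pow_le_pow_left₀ hJpos.le hJ2K 3
      have h8 : (2*(K:ℝ))^3 = 8*K^3 := by ring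
      linarith
    have : (ε' * K / 2)^2 / (8 * K^3) ≤ ‖S J‖^2 / (J:ℝ)^3 := by
      apply div_le_div₀ (by positivity) _ (by positivity) hJ3
      exact pow_le_pow_left₀ (by positivity) hSJ 2
    calc ε'^2 / (32 * K) = (ε' * K / 2)^2 / (8 * K^3) := by field_simp; ring
      _ ≤ ‖S J‖^2 / (J:ℝ)^3 := this
      _ = f J := by rw [hf]; field_simp
  -- block sum lower bound
  have hcard : (Finset.Icc K (K + L)).card = L + 1 := by
    rw [Nat.card_Icc]; omega
  have hblock : c ≤ ∑ J ∈ Finset.Icc K (K + L), f J := by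
    calc c = ε'^3 / (64 * B) := rfl
      _ ≤ (ε' * K / (2*B)) * (ε'^2 / (32 * K)) := by
          have : (ε' * (K:ℝ) / (2*B)) * (ε'^2 / (32 * K)) = ε'^3/(64*B) := by
            field_simp; ring
          rw [this]
      _ ≤ ((L:ℝ) + 1) * (ε'^2 / (32 * K)) := by
          apply mul_le_mul_of_nonneg_right hLge (by positivity)
      _ = (Finset.Icc K (K + L)).card * (ε'^2 / (32 * K)) := by rw [hcard]; push_cast; ring
      _ ≤ ∑ J ∈ Finset.Icc K (K + L), f J := by
          have := Finset.card_nsmul_le_sum (Finset.Icc K (K+L)) f _ hblock_term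
          simpa [nsmul_eq_mul] using this
  -- block sum upper bound via tail
  have hupper : ∑ J ∈ Finset.Icc K (K + L), f J < c := by
    have hsplit : ∑ i ∈ Finset.range (K + L + 1), f i
        = ∑ i ∈ Finset.range K, f i + ∑ J ∈ Finset.Icc K (K + L), f J := by
      have hIcc : Finset.Icc K (K+L) = Finset.Ico K (K+L+1) := by
        rw [Finset.Ico_add_one_right_eq_Icc]
      rw [hIcc, Finset.range_eq_Ico, Finset.range_eq_Ico]
      exact (Finset.sum_Ico_consecutive f (Nat.zero_le K) (by omega : K ≤ K + L + 1)).symm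
    have hNK := hN K (le_trans (le_max_left _ _) hKN)
    rw [Real.dist_eq, abs_sub_lt_iff] at hNK
    have h1 : ∑' i, f i - c < ∑ i ∈ Finset.range K, f i := by linarith [hNK.2]
    have h2 : ∑ i ∈ Finset.range (K + L + 1), f i ≤ ∑' i, f i := hpartial_le _
    linarith [hsplit ▸ h2]
  linarith

theorem sln_of_identDistrib_of_summable
    {Ω : Type*} [MeasurableSpace Ω] (μ : Measure Ω) [IsProbabilityMeasure μ]
    (X : ℕ → Ω → ℂ) (B : ℝ) (hB : 0 < B)
    (hmeas : ∀ m, AEStronglyMeasurable (X m) μ)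
    (hident : ∀ m, ProbabilityTheory.IdentDistrib (X m) (X 1) μ μ)
    (hmean : ∫ ω, X 1 ω ∂μ = 0)
    (hbdd : ∀ m, ∀ᵐ ω ∂μ, ‖X m ω‖ ≤ B)
    (hsum : Summable fun K : ℕ =>
      (1 / (K : ℝ) ^ 3) * ∫ ω, ‖∑ m ∈ Finset.Icc 1 K, X m ω‖ ^ 2 ∂μ) :
    ∀ᵐ ω ∂μ, Tendsto (fun K : ℕ => (K : ℂ)⁻¹ * ∑ m ∈ Finset.Icc 1 K, X m ω)
      atTop (nhds 0) := by
  
  set S : ℕ → Ω → ℂ := fun K ω => ∑ m ∈ Finset.Icc 1 K, X m ω with hS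
  set f : ℕ → Ω → ℝ := fun K ω => (1/(K:ℝ)^3) * ‖S K ω‖^2 with hfdef
  have hSmeas : ∀ K, AEStronglyMeasurable (S K) μ := fun K =>
    Finset.aestronglyMeasurable_fun_sum _ fun m _ => hmeas m
  have hfmeas : ∀ K, AEStronglyMeasurable (f K) μ := fun K => by
    exact (((hSmeas K).norm.mul (hSmeas K).norm).const_mul ((1:ℝ)/(K:ℝ)^3)).congr
      (Eventually.of_forall fun ω => by
        show (1/(K:ℝ)^3) * (‖S K ω‖ * ‖S K ω‖) = (1/(K:ℝ)^3) * ‖S K ω‖^2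
        rw [sq])
  -- almost sure bound on all X m
  have hbdd' : ∀ᵐ ω ∂μ, ∀ m, ‖X m ω‖ ≤ B := ae_all_iff.2 hbdd
  -- integrability
  have hfint : ∀ K, Integrable (f K) μ := by
    intro K
    apply Integrable.mono' (integrable_const ((1/(K:ℝ)^3) * ((K:ℝ)*B)^2)) (hfmeas K)
    filter_upwards [hbdd'] with ω hω
    have hSle : ‖S K ω‖ ≤ (K:ℝ) * B := by
      calc ‖S K ω‖ ≤ ∑ m ∈ Finset.Icc 1 K, ‖X m ω‖ := norm_sum_le _ _
        _ ≤ ∑ m ∈ Finset.Icc 1 K, B := Finset.sum_le_sum fun m _ => hω m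
        _ = (K:ℝ) * B := by rw [Finset.sum_const, Nat.card_Icc]; simp [nsmul_eq_mul]
    have h1 : (0:ℝ) ≤ f K ω := by positivity
    rw [Real.norm_eq_abs, abs_of_nonneg h1]
    have : ‖S K ω‖^2 ≤ ((K:ℝ)*B)^2 := pow_le_pow_left₀ (norm_nonneg _) hSle 2
    have hn : (0:ℝ) ≤ 1/(K:ℝ)^3 := by positivity
    exact mul_le_mul_of_nonneg_left this hn
  have hfnn : ∀ K, 0 ≤ᵐ[μ] f K := fun K => Eventually.of_forall fun ω => by
    simp only [Pi.zero_apply]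
    positivity
  -- a.e. summability
  have hae : ∀ᵐ ω ∂μ, Summable fun K => f K ω := by
    have hmg : ∀ K, AEMeasurable (fun ω => ENNReal.ofReal (f K ω)) μ :=
      fun K => ENNReal.measurable_ofReal.comp_aemeasurable (hfmeas K).aemeasurable
    have key : ∫⁻ ω, ∑' K, ENNReal.ofReal (f K ω) ∂μ ≠ ⊤ := by
      rw [lintegral_tsum hmg]
      have heq : ∀ K, ∫⁻ ω, ENNReal.ofReal (f K ω) ∂μ = ENNReal.ofReal (∫ ω, f K ω ∂μ) :=
        fun K => (ofReal_integral_eq_lintegral_ofReal (hfint K) (hfnn K)).symm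
      simp_rw [heq]
      have hsum' : Summable fun K : ℕ => ∫ ω, f K ω ∂μ := by
        have : ∀ K : ℕ, ∫ ω, f K ω ∂μ
            = (1 / (K : ℝ) ^ 3) * ∫ ω, ‖S K ω‖ ^ 2 ∂μ := fun K => integral_const_mul _ _
        simpa [this] using hsum
      rw [← ENNReal.ofReal_tsum_of_nonneg (fun K => integral_nonneg_of_ae (hfnn K)) hsum']
      exact ENNReal.ofReal_ne_top
    have haelt : ∀ᵐ ω ∂μ, ∑' K, ENNReal.ofReal (f K ω) < ⊤ :=
      ae_lt_top' (AEMeasurable.ennreal_tsum hmg) key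
    filter_upwards [haelt] with ω hω
    have := ENNReal.summable_toReal hω.ne
    refine this.congr fun K => ?_
    rw [ENNReal.toReal_ofReal (by positivity)]
  -- conclusion
  filter_upwards [hae, hbdd'] with ω hω hωB
  have hlip : ∀ K, ‖S (K+1) ω - S K ω‖ ≤ B := by
    intro K
    have : S (K+1) ω - S K ω = X (K+1) ω := by
      rw [hS]
      simp only
      rw [Finset.sum_Icc_succ_top (by omega : 1 ≤ K + 1)]
      ring
    rw [this]; exact hωB (K+1)
  have h0 := det_sln (fun K => S K ω) B hB hlip hω
  rw [tendsto_zero_iff_norm_tendsto_zero]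
  apply h0.congr'
  filter_upwards [eventually_ge_atTop 1] with K hK
  have hKne : ((K:ℂ)) ≠ 0 := by exact_mod_cast Nat.cast_ne_zero.2 (by omega)
  rw [norm_mul, norm_inv, Complex.norm_natCast]
  rw [div_eq_inv_mul]
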